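/- Let B, C > 0 and suppose |eᵢ|_h / |e_{i+1}|_h ≤ B for every 1 ≤ i ≤ r−1 (equivalently hᵢ/h_{i+1} ≤ B²). Let a₁,…,a_r be positive reals with ∏ᵢ aᵢ = 1, let s be the endomorphism with s(eᵢ) = aᵢ·eᵢ and s^{−1/2} the endomorphism with s^{−1/2}(eᵢ) = aᵢ^{−1/2}·eᵢ, and assume |s|_h ≤ C. Let α ∈ ℂ. Then there exist constants C₁ > 0 and ε₁ > 0, depending only on B, C and r, such that for every 0 < ε < ε₁: if |[f_α, s]∘s^{−1/2}|_h ≤ ε, then |s − id_V|_h ≤ C₁·ε. -/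

import Mathlib

/-- The squared Hilbert–Schmidt norm, with respect to the Hermitian inner product
`⟨x,y⟩_h = Σᵢ hᵢ·xᵢ·conj(yᵢ)` on `V = ℂ^r` (for which `e₁,…,e_r` are orthogonal with
`|eᵢ|_h² = hᵢ`), of the endomorphism whose matrix in the standard basis is `M`
(`M j i` is the coefficient of `e_j` in the image of `e_i`):
`|f|_h² = Σ_{i,j} (h_j/h_i)·|M_{j,i}|²`. -/
noncomputable def hsNormSq {r : ℕ} (h : Fin r → ℝ) (M : Matrix (Fin r) (Fin r) ℂ) : ℝ :=
  ∑ i, ∑ j, (h j / h i) * ‖M j i‖ ^ 2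

/-- The matrix of the adjoint `f†_h`, with respect to `⟨·,·⟩_h`, of the endomorphism
with matrix `M`: `(f†_h)_{i,j} = (h_j/h_i)·conj(M_{j,i})`. -/
noncomputable def hAdjoint {r : ℕ} (h : Fin r → ℝ) (M : Matrix (Fin r) (Fin r) ℂ) :
    Matrix (Fin r) (Fin r) ℂ :=
  fun i j => ((h j / h i : ℝ) : ℂ) * (starRingEnd ℂ) (M j i)

/-- The matrix of the endomorphism `f_α` with `f_α(eᵢ) = e_{i+1}` for `i` below the top
index and `f_α(e_top) = α^r·e_bot` (`0`-based indexing of the basis `e₀,…,e_{r−1}`). -/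
def cyclicMat (r : ℕ) (α : ℂ) : Matrix (Fin r) (Fin r) ℂ :=
  fun i j =>
    if (i : ℕ) = (j : ℕ) + 1 then 1
    else if (i : ℕ) = 0 ∧ (j : ℕ) = r - 1 then α ^ r else 0

lemma hsNormSq_diagonal_real {r : ℕ} (h : Fin r → ℝ) (hpos : ∀ i, 0 < h i) (d : Fin r → ℝ) :
    hsNormSq h (Matrix.diagonal fun i => (d i : ℂ)) = ∑ i, (d i) ^ 2 := by
  unfold hsNormSq
  refine Finset.sum_congr rfl fun i _ => ?_
  rw [Finset.sum_eq_single i]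
  · simp [Matrix.diagonal_apply_eq, div_self (hpos i).ne', sq_abs]
  · intro j _ hji; simp [Matrix.diagonal_apply_ne _ hji]
  · simp

lemma hsNormSq_nonneg {r : ℕ} (h : Fin r → ℝ) (hpos : ∀ i, 0 < h i)
    (M : Matrix (Fin r) (Fin r) ℂ) : 0 ≤ hsNormSq h M := by
  refine Finset.sum_nonneg fun i _ => Finset.sum_nonneg fun j _ => ?_
  exact mul_nonneg (div_nonneg (hpos j).le (hpos i).le) (sq_nonneg _)

lemma term_le_hsNormSq {r : ℕ} (h : Fin r → ℝ) (hpos : ∀ i, 0 < h i)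
    (M : Matrix (Fin r) (Fin r) ℂ) (i j : Fin r) :
    (h j / h i) * ‖M j i‖ ^ 2 ≤ hsNormSq h M := by
  have h1 : ∀ i' j' : Fin r, 0 ≤ (h j' / h i') * ‖M j' i'‖ ^ 2 :=
    fun i' j' => mul_nonneg (div_nonneg (hpos j').le (hpos i').le) (sq_nonneg _)
  calc (h j / h i) * ‖M j i‖ ^ 2
      ≤ ∑ j', (h j' / h i) * ‖M j' i‖ ^ 2 :=
        Finset.single_le_sum (fun j' _ => h1 i j') (Finset.mem_univ j)
    _ ≤ hsNormSq h M :=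
        Finset.single_le_sum (f := fun i' => ∑ j', (h j' / h i') * ‖M j' i'‖ ^ 2)
          (fun i' _ => Finset.sum_nonneg fun j' _ => h1 i' j') (Finset.mem_univ i)

lemma sq_le_of_sqrt_le {x y : ℝ} (hx : 0 ≤ x) (hy : 0 ≤ y) (h : Real.sqrt x ≤ y) :
    x ≤ y ^ 2 := by
  nlinarith [Real.sq_sqrt hx, Real.sqrt_nonneg x]

/-- given `B, C > 0`, there are `C₁ > 0` and `ε₁ > 0`, depending only on
`B`, `C` and `r`, such that for any weights `h` with `hᵢ/h_{i+1} ≤ B²` (equivalently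
`|eᵢ|_h/|e_{i+1}|_h ≤ B`), any diagonal automorphism `s(eᵢ) = aᵢ·eᵢ` with `aᵢ > 0`,
`∏ aᵢ = 1` and `|s|_h ≤ C`, any `α ∈ ℂ`, and any `0 < ε < ε₁`:
if `|[f_α,s]∘s^{−1/2}|_h ≤ ε` then `|s − id|_h ≤ C₁·ε`. -/
theorem diagonal_close_to_identity_from_small_commutator
    (r : ℕ) (hr : 2 ≤ r) (B C : ℝ) (hB : 0 < B) (hC : 0 < C) :
    ∃ C₁ : ℝ, 0 < C₁ ∧ ∃ ε₁ : ℝ, 0 < ε₁ ∧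
      ∀ h : Fin r → ℝ, (∀ i, 0 < h i) →
        (∀ i j : Fin r, (j : ℕ) = (i : ℕ) + 1 → h i ≤ B ^ 2 * h j) →
      ∀ a : Fin r → ℝ, (∀ i, 0 < a i) → (∏ i, a i = 1) →
        Real.sqrt (hsNormSq h (Matrix.diagonal fun i => (a i : ℂ))) ≤ C →
      ∀ α : ℂ, ∀ ε : ℝ, 0 < ε → ε < ε₁ →
        Real.sqrt (hsNormSq h
            ((cyclicMat r α * Matrix.diagonal (fun i => (a i : ℂ))
                - Matrix.diagonal (fun i => (a i : ℂ)) * cyclicMat r α)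
              * Matrix.diagonal (fun i => (((Real.sqrt (a i))⁻¹ : ℝ) : ℂ)))) ≤ ε →
        Real.sqrt (hsNormSq h
            (Matrix.diagonal (fun i => (a i : ℂ)) - 1)) ≤ C₁ * ε := by
  have hr0 : (0:ℝ) < r := by exact_mod_cast (by omega : 0 < r)
  have hs0 : (0:ℝ) < Real.sqrt C := Real.sqrt_pos.mpr hC
  refine ⟨2 * r * r * B * Real.sqrt C, by positivity, 1, one_pos, ?_⟩
  intro h hhpos hhB a hapos haprod hsC α ε hε _ hcomm
  set δ : ℝ := B * Real.sqrt C * ε with hδdef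
  have hδ0 : 0 ≤ δ := by positivity
  -- Step A : a i ≤ C
  have hdiag := hsNormSq_diagonal_real h hhpos a
  have hsum_sq : ∑ i, (a i) ^ 2 ≤ C ^ 2 := by
    rw [← hdiag]
    exact sq_le_of_sqrt_le (hsNormSq_nonneg h hhpos _) hC.le hsC
  have haC : ∀ i, a i ≤ C := by
    intro i
    have h1 : (a i) ^ 2 ≤ ∑ j, (a j) ^ 2 :=
      Finset.single_le_sum (f := fun j => a j ^ 2) (fun j _ => sq_nonneg _) (Finset.mem_univ i)
    nlinarith [hapos i]
  -- Step B : adjacent differences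
  set M : Matrix (Fin r) (Fin r) ℂ :=
    (cyclicMat r α * Matrix.diagonal (fun i => (a i : ℂ))
        - Matrix.diagonal (fun i => (a i : ℂ)) * cyclicMat r α)
      * Matrix.diagonal (fun i => (((Real.sqrt (a i))⁻¹ : ℝ) : ℂ)) with hMdef
  have hMsq : hsNormSq h M ≤ ε ^ 2 :=
    sq_le_of_sqrt_le (hsNormSq_nonneg h hhpos _) hε.le hcomm
  have hadj : ∀ i j : Fin r, (j : ℕ) = (i : ℕ) + 1 → |a i - a j| ≤ δ := by
    intro i j hij
    have hentry : M j i = ((a i - a j : ℝ) : ℂ) * (((Real.sqrt (a i))⁻¹ : ℝ) : ℂ) := by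
      rw [hMdef]
      simp [Matrix.mul_diagonal, Matrix.diagonal_mul, Matrix.sub_apply, cyclicMat, hij]
    have habs : ‖M j i‖ = |a i - a j| * (Real.sqrt (a i))⁻¹ := by
      rw [hentry, norm_mul, Complex.norm_real, Complex.norm_real, Real.norm_eq_abs, Real.norm_eq_abs,
        abs_of_nonneg (inv_nonneg.mpr (Real.sqrt_nonneg _))]
    have habs2 : ‖M j i‖ ^ 2 = (a i - a j) ^ 2 / a i := by
      rw [habs, mul_pow, sq_abs, inv_pow, Real.sq_sqrt (hapos i).le, div_eq_mul_inv]
    have hterm : (h j / h i) * ((a i - a j) ^ 2 / a i) ≤ ε ^ 2 := by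
      rw [← habs2]; exact le_trans (term_le_hsNormSq h hhpos M i j) hMsq
    have hratio : 1 / B ^ 2 ≤ h j / h i := by
      rw [div_le_div_iff₀ (by positivity) (hhpos i)]
      nlinarith [hhB i j hij]
    have e1 : (1 / B ^ 2) * ((a i - a j) ^ 2 / a i) ≤ ε ^ 2 := by
      refine le_trans ?_ hterm
      exact mul_le_mul_of_nonneg_right hratio (div_nonneg (sq_nonneg _) (hapos i).le)
    have e2 : (a i - a j) ^ 2 / a i ≤ B ^ 2 * ε ^ 2 := by
      have h5 := mul_le_mul_of_nonneg_left e1 (sq_nonneg B)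
      have hBB : B ^ 2 * (1 / B ^ 2 * ((a i - a j) ^ 2 / a i)) = (a i - a j) ^ 2 / a i := by
        rw [one_div, mul_inv_cancel_left₀ (pow_ne_zero 2 hB.ne')]
      rw [hBB] at h5
      exact h5
    have e3 : (a i - a j) ^ 2 ≤ B ^ 2 * ε ^ 2 * a i := (div_le_iff₀ (hapos i)).mp e2
    have e4 : (a i - a j) ^ 2 ≤ δ ^ 2 := by
      have hδsq : δ ^ 2 = B ^ 2 * ε ^ 2 * C := by
        rw [hδdef, mul_pow, mul_pow, Real.sq_sqrt hC.le]; ring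
      rw [hδsq]
      nlinarith [haC i, hapos i, sq_nonneg (B * ε)]
    calc |a i - a j| = Real.sqrt ((a i - a j) ^ 2) := (Real.sqrt_sq_eq_abs _).symm
      _ ≤ Real.sqrt (δ ^ 2) := Real.sqrt_le_sqrt e4
      _ = δ := Real.sqrt_sq hδ0
  -- Step C : chain bound
  have hz : (0:ℕ) < r := by omega
  have hchain : ∀ n : ℕ, ∀ hn : n < r, |a ⟨n, hn⟩ - a ⟨0, hz⟩| ≤ n * δ := by
    intro n
    induction n with
    | zero => intro hn; simp
    | succ m ih =>
      intro hn
      have hm : m < r := by omega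
      have h1 := hadj ⟨m, hm⟩ ⟨m + 1, hn⟩ rfl
      have h2 := ih hm
      have h3 := abs_sub_le (a ⟨m + 1, hn⟩) (a ⟨m, hm⟩) (a ⟨0, hz⟩)
      rw [abs_sub_comm (a ⟨m, hm⟩)] at h1
      push_cast
      linarith
  have hnear : ∀ i : Fin r, |a i - a ⟨0, hz⟩| ≤ ((r:ℝ) - 1) * δ := by
    intro i
    have h1 := hchain i.1 i.2
    rw [Fin.eta] at h1
    have h2 : ((i:ℕ):ℝ) + 1 ≤ (r:ℝ) := by exact_mod_cast i.2
    calc |a i - a ⟨0, hz⟩| ≤ (i:ℕ) * δ := h1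
      _ ≤ ((r:ℝ) - 1) * δ := mul_le_mul_of_nonneg_right (by linarith) hδ0
  -- Step D : every a i is close to 1
  have hone : ∀ i : Fin r, |a i - 1| ≤ 2 * ((r:ℝ) - 1) * δ := by
    obtain ⟨jj, hjj⟩ : ∃ j, 1 ≤ a j := by
      by_contra hcon
      push_neg at hcon
      have hlt : (∏ i, a i) < ∏ _i : Fin r, (1:ℝ) :=
        Finset.prod_lt_prod_of_nonempty (fun i _ => hapos i) (fun i _ => hcon i)
          (Finset.univ_nonempty_iff.mpr ⟨⟨0, hz⟩⟩)
      simp [haprod] at hlt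
    obtain ⟨kk, hkk⟩ : ∃ k, a k ≤ 1 := by
      by_contra hcon
      push_neg at hcon
      have hlt : (∏ _i : Fin r, (1:ℝ)) < ∏ i, a i :=
        Finset.prod_lt_prod_of_nonempty (fun i _ => one_pos) (fun i _ => hcon i)
          (Finset.univ_nonempty_iff.mpr ⟨⟨0, hz⟩⟩)
      simp [haprod] at hlt
    intro i
    have h1 := hnear i
    have h2 := hnear jj
    have h3 := hnear kk
    rw [abs_le] at h1 h2 h3 ⊢
    constructor
    · linarith [h1.1, h2.2]
    · linarith [h1.2, h3.1]
  -- Step E : conclude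
  have hfin : hsNormSq h (Matrix.diagonal (fun i => (a i : ℂ)) - 1)
      = ∑ i, (a i - 1) ^ 2 := by
    have hd : (Matrix.diagonal (fun i => (a i : ℂ)) - 1)
        = Matrix.diagonal (fun i => ((a i - 1 : ℝ) : ℂ)) := by
      rw [← Matrix.diagonal_one, Matrix.diagonal_sub]
      congr 1
      funext i
      push_cast
      ring
    rw [hd, hsNormSq_diagonal_real h hhpos]
  rw [hfin]
  have hr2 : (2:ℝ) ≤ r := by exact_mod_cast hr
  have hr1 : (1:ℝ) ≤ r := by linarith
  have hKε : (0:ℝ) ≤ 2 * r * r * B * Real.sqrt C * ε := by positivity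
  have hbound : ∑ i, (a i - 1) ^ 2 ≤ (2 * r * r * B * Real.sqrt C * ε) ^ 2 := by
    have h1 : ∑ i, (a i - 1) ^ 2 ≤ ∑ _i : Fin r, (2 * ((r:ℝ) - 1) * δ) ^ 2 := by
      refine Finset.sum_le_sum fun i _ => ?_
      have h4 := pow_le_pow_left₀ (abs_nonneg (a i - 1)) (hone i) 2
      rwa [sq_abs] at h4
    have h2 : ∑ _i : Fin r, (2 * ((r:ℝ) - 1) * δ) ^ 2 = r * (2 * ((r:ℝ) - 1) * δ) ^ 2 := by
      rw [Finset.sum_const, Finset.card_univ, Fintype.card_fin, nsmul_eq_mul]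
    rw [h2] at h1
    refine le_trans h1 ?_
    have e : (2 * (r:ℝ) * r * B * Real.sqrt C * ε) ^ 2 = ((r:ℝ) * r) * (2 * (r:ℝ) * δ) ^ 2 := by
      rw [hδdef]; ring
    rw [e]
    have g1 : (2 * ((r:ℝ) - 1) * δ) ^ 2 ≤ (2 * (r:ℝ) * δ) ^ 2 :=
      pow_le_pow_left₀ (mul_nonneg (by linarith) hδ0)
        (mul_le_mul_of_nonneg_right (by linarith) hδ0) 2
    have g2 : (r:ℝ) ≤ (r:ℝ) * r := le_mul_of_one_le_left hr0.le hr1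
    calc (r:ℝ) * (2 * ((r:ℝ) - 1) * δ) ^ 2
        ≤ (r:ℝ) * (2 * (r:ℝ) * δ) ^ 2 := mul_le_mul_of_nonneg_left g1 hr0.le
      _ ≤ ((r:ℝ) * r) * (2 * (r:ℝ) * δ) ^ 2 :=
          mul_le_mul_of_nonneg_right g2 (sq_nonneg _)
  calc Real.sqrt (∑ i, (a i - 1) ^ 2)
      ≤ Real.sqrt ((2 * r * r * B * Real.sqrt C * ε) ^ 2) := Real.sqrt_le_sqrt hbound
    _ = 2 * r * r * B * Real.sqrt C * ε := Real.sqrt_sq hKε
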